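/- arXiv:2108.09414 — 2 statements merged into one kernel-verified Lean document; each statement's English description precedes it below -/
import Mathlib

section
/- For every integer n ≥ 0, the number of partitions of n whose mex is congruent to 3 modulo 4 equals ∑_{k≥0} ( p(n − (2k+1)(4k+3)) − p(n − (2k+1)(4k+3) − (4k+3)) ), where p(m) = 0 for m < 0. -/
/-- The mex of a partition: the smallest positive integer that is not a part. -/
noncomputable def partMex {n : ℕ} (P : Nat.Partition n) : ℕ :=
  sInf {k : ℕ | 0 < k ∧ k ∉ P.parts}

/-- The partition-counting function, extended by `0` to negative arguments. -/
noncomputable def pZ (m : ℤ) : ℤ :=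
  if 0 ≤ m then (Nat.card (Nat.Partition m.toNat) : ℤ) else 0

def Tm (m : ℕ) : ℕ := ∑ i ∈ Finset.Icc 1 m, i

lemma Tm_succ (m : ℕ) : Tm (m+1) = Tm m + (m+1) := by
  unfold Tm
  rw [Finset.sum_Icc_succ_top (by omega)]

lemma Tm_two_mul (m : ℕ) : 2 * Tm m = m * (m+1) := by
  induction m with
  | zero => simp [Tm]
  | succ k ih => rw [Tm_succ]; ring_nf; ring_nf at ih; omega

lemma Tm_eq (k : ℕ) : Tm (4*k+2) = (2*k+1)*(4*k+3) := by
  have h := Tm_two_mul (4*k+2)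
  have h2 : (4*k+2) * (4*k+2+1) = 2 * ((2*k+1)*(4*k+3)) := by ring
  omega

def Sm (m : ℕ) : Multiset ℕ := (Finset.Icc 1 m).val

lemma Sm_sum (m : ℕ) : (Sm m).sum = Tm m := by
  unfold Sm Tm; rw [Finset.sum]; congr 1; exact (Multiset.map_id _).symm

lemma Sm_le_iff {m : ℕ} {t : Multiset ℕ} : Sm m ≤ t ↔ ∀ i, 1 ≤ i → i ≤ m → i ∈ t := by
  unfold Sm
  rw [Multiset.le_iff_subset (Finset.Icc 1 m).nodup]
  constructor
  · intro h i h1 h2; exact h (by simp [Finset.mem_Icc]; omega)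
  · intro h i hi
    simp only [Finset.mem_val, Finset.mem_Icc] at hi
    exact h i hi.1 hi.2

-- parts of a partition of n are ≤ n
lemma part_le {n : ℕ} (P : Nat.Partition n) {i : ℕ} (hi : i ∈ P.parts) : i ≤ n := by
  rw [← P.parts_sum]
  exact Multiset.le_sum_of_mem hi  -- name?

-- the mex set is nonempty
lemma mex_mem {n : ℕ} (P : Nat.Partition n) :
    0 < partMex P ∧ partMex P ∉ P.parts := by
  have hne : {k : ℕ | 0 < k ∧ k ∉ P.parts}.Nonempty := by
    refine ⟨n+1, by omega, fun h => ?_⟩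
    exact absurd (part_le P h) (by omega)
  exact Nat.sInf_mem hne

lemma mex_min {n : ℕ} (P : Nat.Partition n) {j : ℕ} (h1 : 0 < j) (h2 : j < partMex P) :
    j ∈ P.parts := by
  by_contra h
  have := Nat.sInf_le (show j ∈ {k : ℕ | 0 < k ∧ k ∉ P.parts} from ⟨h1, h⟩)
  unfold partMex at h2
  omega

lemma mex_eq_iff {n : ℕ} (P : Nat.Partition n) {m : ℕ} (hm : 1 ≤ m) :
    partMex P = m ↔ (Sm (m-1) ≤ P.parts ∧ ¬ (Sm m ≤ P.parts)) := by
  rw [Sm_le_iff, Sm_le_iff]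
  constructor
  · rintro rfl
    refine ⟨fun i h1 h2 => mex_min P h1 (by omega), fun h => ?_⟩
    exact (mex_mem P).2 (h _ hm le_rfl)
  · rintro ⟨h1, h2⟩
    push_neg at h2
    obtain ⟨i, hi1, hi2, hi3⟩ := h2
    have him : i = m := by
      by_contra hne
      exact hi3 (h1 i hi1 (by omega))
    subst him
    have hub : partMex P ≤ i := Nat.sInf_le ⟨hi1, hi3⟩
    have := mex_mem P
    rcases lt_or_eq_of_le hub with h | h
    · exact absurd (h1 _ this.1 (by omega)) this.2
    · exact h

-- equivalence for counting
lemma count_contains (n m : ℕ) :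
    (Nat.card {P : Nat.Partition n // Sm m ≤ P.parts} : ℤ) = pZ ((n : ℤ) - Tm m) := by
  by_cases h : Tm m ≤ n
  · have : Nat.card {P : Nat.Partition n // Sm m ≤ P.parts}
        = Nat.card (Nat.Partition (n - Tm m)) := by
      apply Nat.card_congr
      refine ⟨fun P => ⟨P.1.parts - Sm m, ?_, ?_⟩, fun Q => ⟨⟨Q.parts + Sm m, ?_, ?_⟩, ?_⟩, ?_, ?_⟩
      · intro i hi
        exact P.1.parts_pos (Multiset.mem_of_le (Multiset.sub_le_self _ _) hi)
      · have := P.2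
        have heq : P.1.parts - Sm m + Sm m = P.1.parts := tsub_add_cancel_of_le this
        have := congrArg Multiset.sum heq
        rw [Multiset.sum_add, Sm_sum, P.1.parts_sum] at this
        omega
      · intro i hi
        rcases Multiset.mem_add.mp hi with h | h
        · exact Q.parts_pos h
        · simp only [Sm, Finset.mem_val, Finset.mem_Icc] at h; omega
      · rw [Multiset.sum_add, Sm_sum, Q.parts_sum]; omega
      · exact Multiset.le_add_left _ _
      · intro P
        exact Subtype.ext (Nat.Partition.ext (tsub_add_cancel_of_le P.2))
      · intro Q
        exact Nat.Partition.ext (add_tsub_cancel_right _ _)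
    have h3 : ((n:ℤ) - (Tm m:ℤ)).toNat = n - Tm m := by omega
    rw [pZ, if_pos (by omega), h3, this]
  · have : IsEmpty {P : Nat.Partition n // Sm m ≤ P.parts} := by
      refine ⟨fun P => h ?_⟩
      calc Tm m = (Sm m).sum := (Sm_sum m).symm
        _ ≤ P.1.parts.sum := by
            obtain ⟨u, hu⟩ := Multiset.le_iff_exists_add.mp P.2
            rw [hu, Multiset.sum_add]; omega
        _ = n := P.1.parts_sum
    rw [Nat.card_of_isEmpty, pZ, if_neg (by omega)]
    simp

lemma count_mex (n m : ℕ) (hm : 1 ≤ m) :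
    (Nat.card {P : Nat.Partition n // partMex P = m} : ℤ) =
      pZ ((n : ℤ) - Tm (m-1)) - pZ ((n : ℤ) - Tm m) := by
  have key : Nat.card {P : Nat.Partition n // Sm (m-1) ≤ P.parts} =
      Nat.card {P : Nat.Partition n // Sm m ≤ P.parts} +
      Nat.card {P : Nat.Partition n // partMex P = m} := by
    classical
    have e1 : {P : Nat.Partition n // Sm (m-1) ≤ P.parts} ≃
        {x : {P : Nat.Partition n // Sm (m-1) ≤ P.parts} // Sm m ≤ x.1.parts} ⊕
        {x : {P : Nat.Partition n // Sm (m-1) ≤ P.parts} // ¬ Sm m ≤ x.1.parts} :=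
      (Equiv.sumCompl _).symm
    have e2 : {x : {P : Nat.Partition n // Sm (m-1) ≤ P.parts} // Sm m ≤ x.1.parts} ≃
        {P : Nat.Partition n // Sm m ≤ P.parts} := by
      refine (Equiv.subtypeSubtypeEquivSubtypeInter
        (fun P : Nat.Partition n => Sm (m-1) ≤ P.parts)
        (fun P : Nat.Partition n => Sm m ≤ P.parts)).trans (Equiv.subtypeEquivRight ?_)
      intro P
      constructor
      · exact And.right
      · intro h
        refine ⟨?_, h⟩
        rw [Sm_le_iff] at h ⊢
        intro i h1 h2
        exact h i h1 (by omega)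
    have e3 : {x : {P : Nat.Partition n // Sm (m-1) ≤ P.parts} // ¬ Sm m ≤ x.1.parts} ≃
        {P : Nat.Partition n // partMex P = m} := by
      refine (Equiv.subtypeSubtypeEquivSubtypeInter
        (fun P : Nat.Partition n => Sm (m-1) ≤ P.parts)
        (fun P : Nat.Partition n => ¬ Sm m ≤ P.parts)).trans (Equiv.subtypeEquivRight ?_)
      intro P
      rw [mex_eq_iff P hm]
    rw [Nat.card_congr e1, Nat.card_sum, Nat.card_congr e2, Nat.card_congr e3]
  have h1 := count_contains n (m-1)
  have h2 := count_contains n m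
  rw [key] at h1
  push_cast at h1
  omega

lemma mex_le {n : ℕ} (P : Nat.Partition n) : partMex P ≤ n + 1 := by
  by_contra h
  have h2 : n + 1 ∈ P.parts := mex_min P (by omega) (by omega)
  have := part_le P h2
  omega

/-- The number of partitions of `n` with mex congruent to `3` modulo `4` equals
`∑_{k ≥ 0} (p(n - (2k+1)(4k+3)) - p(n - (2k+1)(4k+3) - (4k+3)))`; all terms with `k > n`
vanish. -/
theorem stmt_7 (n : ℕ) :
    (Nat.card {P : Nat.Partition n // partMex P % 4 = 3} : ℤ) =
      ∑ k ∈ Finset.range (n + 1),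
        (pZ ((n : ℤ) - ((2 * k + 1) * (4 * k + 3) : ℕ)) -
          pZ ((n : ℤ) - ((2 * k + 1) * (4 * k + 3) : ℕ) - (4 * k + 3 : ℕ))) := by
  have e : {P : Nat.Partition n // partMex P % 4 = 3} ≃
      (Σ k : Fin (n+1), {P : Nat.Partition n // partMex P = 4 * (k:ℕ) + 3}) := by
    refine ⟨fun P => ⟨⟨partMex P.1 / 4, ?_⟩, ⟨P.1, ?_⟩⟩, fun x => ⟨x.2.1, ?_⟩, ?_, ?_⟩
    · have h1 := mex_le P.1
      have h2 := P.2
      change partMex P.1 % 4 = 3 at h2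
      omega
    · show partMex P.1 = 4 * (partMex P.1 / 4) + 3
      have := P.2
      omega
    · show partMex x.2.1 % 4 = 3
      rw [x.2.2]
      omega
    · intro P; rfl
    · rintro ⟨⟨k, hklt⟩, P, hP⟩
      have hP' : partMex P = 4 * k + 3 := hP
      have hk : partMex P / 4 = k := by omega
      subst hk
      rfl
  classical
  rw [Nat.card_congr e, Nat.card_eq_fintype_card, Fintype.card_sigma]
  simp_rw [← Nat.card_eq_fintype_card]
  push_cast
  rw [Fin.sum_univ_eq_sum_range
    (fun k => (Nat.card {P : Nat.Partition n // partMex P = 4 * k + 3} : ℤ))]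
  apply Finset.sum_congr rfl
  intro k _
  have h := count_mex n (4*k+3) (by omega)
  have h1 : 4*k+3-1 = 4*k+2 := by omega
  rw [h1, Tm_eq] at h
  have h2 : Tm (4*k+3) = (2*k+1)*(4*k+3) + (4*k+3) := by
    have h3 := Tm_succ (4*k+2)
    rw [Tm_eq] at h3
    have h4 : 4*k+2+1 = 4*k+3 := by omega
    rw [h4] at h3
    omega
  rw [h2] at h
  rw [h]
  congr 2 <;> push_cast <;> ring
end

section
/- For every integer n ≥ 2, the number of partitions of n with crank equal to 0 equals F(n) − F(n−1), where F(m) is the number of partitions of m whose Frobenius symbol contains no entry equal to 0 in either row; equivalently, F(m) counts partitions λ of m with Durfee square side d = max{i : λ_i ≥ i} satisfying λ_d ≥ d + 1 and λ'_d ≥ d + 1, where λ' is the conjugate partition. -/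
/-- Number of parts equal to 1 in a partition. -/
def partOmega {n : ℕ} (P : Nat.Partition n) : ℕ := P.parts.count 1

/-- Number of parts strictly greater than `partOmega P`. -/
def partMu {n : ℕ} (P : Nat.Partition n) : ℕ :=
  (P.parts.filter (fun x => partOmega P < x)).card

/-- The crank of a partition: the largest part if there are no parts equal to 1,
and `μ(λ) - ω(λ)` otherwise. -/
def crank {n : ℕ} (P : Nat.Partition n) : ℤ :=
  if partOmega P = 0 then (P.parts.sup : ℤ)
  else (partMu P : ℤ) - (partOmega P : ℤ)

/-- The Durfee square side of a partition of `n`: the largest `d` such that the partition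
has at least `d` parts each of size at least `d`. -/
def durfee {n : ℕ} (P : Nat.Partition n) : ℕ :=
  Nat.findGreatest (fun i => i ≤ Multiset.card (P.parts.filter (fun x => i ≤ x))) n

/-- `F m` is the number of partitions of `m` whose Frobenius symbol has no entry `0` in
either row: with Durfee square side `d`, this says there are at least `d` parts `≥ d + 1`
(i.e. `λ_d ≥ d + 1`) and at least `d + 1` parts `≥ d` (i.e. `λ'_d ≥ d + 1`). -/
noncomputable def F (m : ℕ) : ℕ :=
  Nat.card {P : Nat.Partition m //
    durfee P ≤ Multiset.card (P.parts.filter (fun x => durfee P + 1 ≤ x)) ∧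
    durfee P + 1 ≤ Multiset.card (P.parts.filter (fun x => durfee P ≤ x))}


open Multiset

/-- number of parts of `s` that are `≥ i`. -/
def Nge (s : Multiset ℕ) (i : ℕ) : ℕ := Multiset.card (s.filter (fun x => i ≤ x))

lemma Nge_cons (s : Multiset ℕ) (a i : ℕ) :
    Nge (a ::ₘ s) i = Nge s i + (if i ≤ a then 1 else 0) := by
  simp only [Nge, filter_cons]
  split <;> simp [add_comm]

lemma Nge_le_card (s : Multiset ℕ) (i : ℕ) : Nge s i ≤ Multiset.card s :=
  card_le_card (filter_le _ _)

lemma Nge_mono (s : Multiset ℕ) {i j : ℕ} (h : i ≤ j) : Nge s j ≤ Nge s i :=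
  card_le_card (monotone_filter_right s (fun x hx => le_trans h hx))

lemma Nge_add (s t : Multiset ℕ) (i : ℕ) : Nge (s + t) i = Nge s i + Nge t i := by
  simp [Nge, filter_add]

lemma Nge_replicate (j i : ℕ) : Nge (replicate j 1) i = if i ≤ 1 then j else 0 := by
  by_cases h : i ≤ 1
  <;> simp only [h, if_true, if_false]
  · rw [Nge, filter_eq_self.2, card_replicate]
    intro a ha; rw [eq_of_mem_replicate ha]; exact h
  · rw [Nge, filter_eq_nil.2, card_zero]
    intro a ha; rw [eq_of_mem_replicate ha]; omega

lemma Nge_filter_two (s : Multiset ℕ) {i : ℕ} (hi : 2 ≤ i) :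
    Nge (s.filter (fun x => 2 ≤ x)) i = Nge s i := by
  rw [Nge, filter_filter, Nge]
  congr 1
  apply filter_congr
  intro x _
  constructor
  · rintro ⟨h, _⟩; exact h
  · intro h; exact ⟨h, le_trans hi h⟩

lemma exists_mem_of_Nge {s : Multiset ℕ} {i : ℕ} (h : 1 ≤ Nge s i) : ∃ x ∈ s, i ≤ x := by
  rw [Nge] at h
  obtain ⟨x, hx⟩ := card_pos_iff_exists_mem.1 h
  rw [mem_filter] at hx
  exact ⟨x, hx.1, hx.2⟩

lemma ones_decomp {s : Multiset ℕ} (hpos : ∀ x ∈ s, 0 < x) :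
    s.filter (fun x => 2 ≤ x) + replicate (s.count 1) 1 = s := by
  have h1 : s.filter (fun x => ¬ 2 ≤ x) = s.filter (· = 1) := by
    apply filter_congr
    intro x hx
    have := hpos x hx
    omega
  have h2 : s.filter (fun a => ¬ 2 ≤ a) = replicate (s.count 1) 1 := by
    rw [h1, filter_eq']
  conv_rhs => rw [← filter_add_not (fun x => 2 ≤ x) s]
  rw [h2]

lemma sup_mem {s : Multiset ℕ} (h : s ≠ 0) : s.sup ∈ s := by
  induction s using Multiset.induction with
  | empty => exact absurd rfl h
  | cons a t ih =>
    rw [sup_cons]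
    rcases eq_or_ne t 0 with rfl | ht
    · simp
    · rcases le_total a t.sup with h1 | h1
      · rw [sup_eq_right.mpr h1]; exact mem_cons_of_mem (ih ht)
      · rw [sup_eq_left.mpr h1]; exact mem_cons_self _ _

lemma card_le_sum {s : Multiset ℕ} (hpos : ∀ x ∈ s, 0 < x) : Multiset.card s ≤ s.sum := by
  induction s using Multiset.induction with
  | empty => simp
  | cons a t ih =>
    rw [card_cons, sum_cons]
    have ha : 0 < a := hpos a (mem_cons_self _ _)
    have := ih (fun x hx => hpos x (mem_cons_of_mem hx))
    omega

lemma count_eq_Nge_sub {s : Multiset ℕ} (d : ℕ) : Nge s d = Nge s (d + 1) + s.count d := by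
  have h := filter_add_filter (s := s) (p := fun x => d + 1 ≤ x) (q := fun x => x = d)
  have h1 : (s.filter fun a => (d + 1 ≤ a) ∨ a = d) = s.filter (fun x => d ≤ x) := by
    apply filter_congr; intro x _; constructor <;> intro hh <;> omega
  have h2 : (s.filter fun a => (d + 1 ≤ a) ∧ a = d) = 0 := by
    apply filter_eq_nil.2; intro x _ hh; omega
  rw [h1, h2, add_zero] at h
  have h3 : Multiset.card (s.filter (fun x => x = d)) = s.count d := by
    rw [count, countP_eq_card_filter]
    congr 1; apply filter_congr; intro x _; exact eq_comm
  have := congrArg Multiset.card h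
  rw [card_add, h3] at this
  rw [Nge, Nge, ← this]

section durfee

variable {n : ℕ} (P : Nat.Partition n)

lemma parts_card_le : Multiset.card P.parts ≤ n := by
  have h := card_le_sum (s := P.parts) (fun x hx => P.parts_pos hx)
  rwa [P.parts_sum] at h

lemma durfee_eq {d : ℕ} (h1 : d ≤ Nge P.parts d) (h2 : Nge P.parts (d + 1) ≤ d) :
    durfee P = d := by
  rw [durfee, Nat.findGreatest_eq_iff]
  refine ⟨le_trans h1 (le_trans (Nge_le_card _ _) (parts_card_le P)), fun _ => h1, ?_⟩
  intro k hk _ hPk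
  have : Nge P.parts k ≤ Nge P.parts (d + 1) := Nge_mono _ (by omega)
  have hPk' : k ≤ Nge P.parts k := hPk
  omega

lemma durfee_spec1 : durfee P ≤ Nge P.parts (durfee P) := by
  rcases Nat.eq_zero_or_pos (durfee P) with h | h
  · omega
  · have h2 := (Nat.findGreatest_eq_iff
      (P := fun i => i ≤ Multiset.card (P.parts.filter (fun x => i ≤ x)))
      (k := n) (m := durfee P)).1 rfl
    exact h2.2.1 (by omega)

lemma durfee_spec2 : Nge P.parts (durfee P + 1) ≤ durfee P := by
  by_contra hcon
  push_neg at hcon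
  have h1 : durfee P + 1 ≤ Nge P.parts (durfee P + 1) := hcon
  have h2 : durfee P + 1 ≤ n := le_trans h1 (le_trans (Nge_le_card _ _) (parts_card_le P))
  have h3 := Nat.findGreatest_is_greatest
    (P := fun i => i ≤ Multiset.card (P.parts.filter (fun x => i ≤ x)))
    (k := durfee P + 1) (n := n) (Nat.lt_succ_self _) h2
  exact h3 h1

lemma durfee_pos (hn : 1 ≤ n) : 1 ≤ durfee P := by
  apply Nat.le_findGreatest hn
  show 1 ≤ Multiset.card (P.parts.filter (fun x => 1 ≤ x))
  have hne : P.parts ≠ 0 := by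
    intro h
    have := P.parts_sum
    rw [h] at this
    simp at this
    omega
  have h : P.parts.filter (fun x => 1 ≤ x) = P.parts :=
    filter_eq_self.2 (fun a ha => P.parts_pos ha)
  rw [h]
  rwa [Nat.one_le_iff_ne_zero, Ne, card_eq_zero]

end durfee

set_option linter.unusedVariables false

def Fcond {m : ℕ} (P : Nat.Partition m) : Prop :=
  durfee P ≤ Multiset.card (P.parts.filter (fun x => durfee P + 1 ≤ x)) ∧
  durfee P + 1 ≤ Multiset.card (P.parts.filter (fun x => durfee P ≤ x))

lemma F_eq (m : ℕ) : F m = Nat.card {P : Nat.Partition m // Fcond P} := rfl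

lemma Fcond_iff {m : ℕ} (P : Nat.Partition m) :
    Fcond P ↔ durfee P ≤ Nge P.parts (durfee P + 1) ∧ durfee P + 1 ≤ Nge P.parts (durfee P) :=
  Iff.rfl

/-- In an `F` partition, the number of parts `≥ d+1` is exactly `d`. -/
lemma Fcond_Nge_succ {m : ℕ} {P : Nat.Partition m} (h : Fcond P) :
    Nge P.parts (durfee P + 1) = durfee P :=
  le_antisymm (durfee_spec2 P) ((Fcond_iff P).1 h).1

lemma Fcond_Nge {m : ℕ} {P : Nat.Partition m} (h : Fcond P) :
    durfee P + 1 ≤ Nge P.parts (durfee P) := ((Fcond_iff P).1 h).2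

lemma Fcond_sup_ge {m : ℕ} {P : Nat.Partition m} (h : Fcond P) (hm : 1 ≤ m) :
    durfee P + 1 ≤ P.parts.sup := by
  have hd := durfee_pos P hm
  have h1 : 1 ≤ Nge P.parts (durfee P + 1) := by rw [Fcond_Nge_succ h]; omega
  obtain ⟨x, hx, hx2⟩ := exists_mem_of_Nge h1
  exact le_trans hx2 (Multiset.le_sup hx)

lemma partMu_eq {n : ℕ} (P : Nat.Partition n) :
    partMu P = Nge P.parts (partOmega P + 1) := by
  rfl

lemma parts_ne_zero {n : ℕ} (P : Nat.Partition n) (hn : 1 ≤ n) : P.parts ≠ 0 := by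
  intro h
  have := P.parts_sum
  rw [h] at this
  simp at this
  omega

lemma crank_eq_zero_iff {n : ℕ} (P : Nat.Partition n) (hn : 1 ≤ n) :
    crank P = 0 ↔ 1 ≤ partOmega P ∧ Nge P.parts (partOmega P + 1) = partOmega P := by
  rw [crank]
  by_cases h : partOmega P = 0
  · rw [if_pos h]
    constructor
    · intro hs
      exfalso
      have hne := parts_ne_zero P hn
      have hmem := sup_mem hne
      have := P.parts_pos hmem
      have : (P.parts.sup : ℤ) ≠ 0 := by
        simp only [ne_eq, Nat.cast_eq_zero]
        omega
      exact this hs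
    · intro ⟨h1, _⟩; omega
  · rw [if_neg h]
    constructor
    · intro hs
      refine ⟨by omega, ?_⟩
      rw [← partMu_eq]
      omega
    · intro ⟨h1, h2⟩
      rw [← partMu_eq] at h2
      rw [h2]
      ring

/-- Build a partition from a multiset. -/
def mkPart (m : ℕ) (s : Multiset ℕ) (hpos : ∀ x ∈ s, 0 < x) (hsum : s.sum = m) :
    Nat.Partition m where
  parts := s
  parts_pos := fun hi => hpos _ hi
  parts_sum := hsum
/-! ### The multiset-level maps -/

/-- The map from crank-zero partitions to `G`-partitions, at multiset level. -/
def psiM (s : Multiset ℕ) : Multiset ℕ :=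
  ((s.erase s.sup).sup ⊔ (s.count 1 + 1)) ::ₘ (s.count 1) ::ₘ
    ((s.erase s.sup).filter (fun x => 2 ≤ x) +
      Multiset.replicate (s.sup - ((s.erase s.sup).sup ⊔ (s.count 1 + 1))) 1)

/-- The inverse map, at multiset level; `d` is the Durfee square side. -/
def chiM (s : Multiset ℕ) (d : ℕ) : Multiset ℕ :=
  (s.sup + ((s.erase s.sup).erase d).count 1) ::ₘ
    (((s.erase s.sup).erase d).filter (fun x => 2 ≤ x) + Multiset.replicate d 1)

lemma mem_ne_zero {s : Multiset ℕ} {a : ℕ} (h : a ∈ s) : s ≠ 0 := by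
  intro h0
  rw [h0] at h
  exact Multiset.notMem_zero _ h

lemma count_one_filter_two (t : Multiset ℕ) : (t.filter (fun x => 2 ≤ x)).count 1 = 0 := by
  rw [count_filter]
  simp

lemma filter_two_replicate (m : ℕ) :
    (Multiset.replicate m (1 : ℕ)).filter (fun x => 2 ≤ x) = 0 := by
  apply filter_eq_nil.2
  intro a ha
  rw [eq_of_mem_replicate ha]
  omega

lemma filter_two_idem (t : Multiset ℕ) :
    (t.filter (fun x => 2 ≤ x)).filter (fun x => 2 ≤ x) = t.filter (fun x => 2 ≤ x) :=
  filter_eq_self.2 (fun a ha => (mem_filter.1 ha).2)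

lemma psi_main {s : Multiset ℕ} {k : ℕ} (hpos : ∀ x ∈ s, 0 < x) (hk : 1 ≤ k)
    (hcnt : s.count 1 = k) (hN : Nge s (k + 1) = k) :
    (psiM s).sum = s.sum ∧ (∀ x ∈ psiM s, 0 < x) ∧
    Nge (psiM s) (k + 1) = k ∧ k + 1 ≤ Nge (psiM s) k ∧
    chiM (psiM s) k = s ∧
    (2 ≤ (psiM s).count (psiM s).sup ∨ (psiM s).sup = 2) := by
  have hmem1 : (1 : ℕ) ∈ s := by rw [← count_pos, hcnt]; omega
  have hne : s ≠ 0 := by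
    intro h0
    rw [h0] at hmem1
    exact Multiset.notMem_zero _ hmem1
  -- b1 = sup s, and k+1 ≤ b1
  have hb1mem : s.sup ∈ s := sup_mem hne
  have hb1 : k + 1 ≤ s.sup := by
    obtain ⟨x, hx, hx2⟩ := exists_mem_of_Nge (s := s) (i := k + 1) (show 1 ≤ Nge s (k+1) by omega)
    exact le_trans hx2 (Multiset.le_sup hx)
  set b1 := s.sup with hb1def
  set s1 := s.erase b1 with hs1def
  have hs : s = b1 ::ₘ s1 := (Multiset.cons_erase hb1mem).symm
  have hs1pos : ∀ x ∈ s1, 0 < x := fun x hx => hpos x (Multiset.mem_of_mem_erase hx)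
  have hs1cnt : s1.count 1 = k := by
    rw [hs1def, count_erase_of_ne (by omega) s, hcnt]
  have hs1sup_le : s1.sup ≤ b1 := by
    apply Multiset.sup_le.2
    intro x hx
    exact Multiset.le_sup (Multiset.mem_of_mem_erase hx)
  have hNs1 : Nge s1 (k + 1) + 1 = k := by
    have := Nge_cons s1 b1 (k + 1)
    rw [← hs, hN, if_pos hb1] at this
    omega
  set b2 := s1.sup ⊔ (k + 1) with hb2def
  have hb2b1 : b2 ≤ b1 := sup_le_iff.2 ⟨hs1sup_le, hb1⟩
  have hb2k : k + 1 ≤ b2 := le_sup_right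
  set f1 := s1.filter (fun x => 2 ≤ x) with hf1def
  set r1 := Multiset.replicate (b1 - b2) 1 with hr1def
  have hpsi : psiM s = b2 ::ₘ k ::ₘ (f1 + r1) := by
    rw [psiM, hcnt]
  have hdec : f1 + Multiset.replicate k 1 = s1 := by
    rw [hf1def, ← hs1cnt]; exact ones_decomp hs1pos
  -- sum
  have hsum : (psiM s).sum = s.sum := by
    have h1 : s1.sum = f1.sum + k := by
      have h := congrArg Multiset.sum hdec
      rw [Multiset.sum_add, Multiset.sum_replicate, smul_eq_mul, mul_one] at h
      omega
    have h2 : s.sum = b1 + s1.sum := by rw [hs, Multiset.sum_cons]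
    have hr1sum : r1.sum = b1 - b2 := by
      rw [hr1def, Multiset.sum_replicate, smul_eq_mul, mul_one]
    rw [hpsi]
    simp only [Multiset.sum_cons, Multiset.sum_add]
    rw [hr1sum]
    omega
  -- positivity
  have hposout : ∀ x ∈ psiM s, 0 < x := by
    rw [hpsi]
    intro x hx
    rcases Multiset.mem_cons.1 hx with rfl | hx
    · omega
    rcases Multiset.mem_cons.1 hx with rfl | hx
    · omega
    rcases Multiset.mem_add.1 hx with hx | hx
    · have := (mem_filter.1 hx).2; omega
    · rw [eq_of_mem_replicate hx]; omega
  -- Nge computations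
  have hNf1 : ∀ i, 2 ≤ i → Nge f1 i = Nge s1 i := fun i hi => Nge_filter_two s1 hi
  have hNpsi : ∀ i, Nge (psiM s) i =
      (if i ≤ b2 then 1 else 0) + (if i ≤ k then 1 else 0) + Nge f1 i +
        (if i ≤ 1 then b1 - b2 else 0) := by
    intro i
    rw [hpsi, Nge_cons, Nge_cons, Nge_add, Nge_replicate]
    omega
  have hNsucc : Nge (psiM s) (k + 1) = k := by
    rw [hNpsi, if_pos hb2k, if_neg (by omega), if_neg (by omega), hNf1 _ (by omega)]
    omega
  have hNk : k + 1 ≤ Nge (psiM s) k := by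
    have h1 : Nge f1 (k + 1) ≤ Nge f1 k := Nge_mono _ (by omega)
    have h2 : Nge f1 (k + 1) = k - 1 := by rw [hNf1 _ (by omega)]; omega
    rw [hNpsi, if_pos (by omega : k ≤ b2), if_pos (le_refl k)]
    split <;> omega
  -- sup of psiM s
  have hsupf1 : f1.sup ≤ b2 := by
    apply Multiset.sup_le.2
    intro x hx
    exact le_trans (Multiset.le_sup (mem_filter.1 hx).1) le_sup_left
  have hsupr1 : r1.sup ≤ b2 := by
    apply Multiset.sup_le.2
    intro x hx
    rw [eq_of_mem_replicate hx]
    omega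
  have hsup : (psiM s).sup = b2 := by
    rw [hpsi, Multiset.sup_cons, Multiset.sup_cons, Multiset.sup_add]
    apply sup_eq_left.2
    exact sup_le_iff.2 ⟨by omega, sup_le_iff.2 ⟨hsupf1, hsupr1⟩⟩
  -- chiM ∘ psiM = id
  have herase1 : (psiM s).erase (psiM s).sup = k ::ₘ (f1 + r1) := by
    rw [hsup, hpsi, Multiset.erase_cons_head]
  have herase2 : ((psiM s).erase (psiM s).sup).erase k = f1 + r1 := by
    rw [herase1, Multiset.erase_cons_head]
  have hcnt1 : (f1 + r1).count 1 = b1 - b2 := by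
    rw [Multiset.count_add, count_one_filter_two, hr1def, Multiset.count_replicate, if_pos rfl]
    omega
  have hfilt : (f1 + r1).filter (fun x => 2 ≤ x) = f1 := by
    rw [Multiset.filter_add, filter_two_idem, hr1def, filter_two_replicate, add_zero]
  have hchipsi : chiM (psiM s) k = s := by
    rw [chiM, herase2, hcnt1, hfilt, hsup]
    have : b2 + (b1 - b2) = b1 := by omega
    rw [this, hs, ← hdec]
  -- G-condition
  have hG : 2 ≤ (psiM s).count (psiM s).sup ∨ (psiM s).sup = 2 := by
    rcases Nat.lt_or_ge k 2 with hk1 | hk2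
    · -- k = 1 : show b2 = 2
      right
      have hk1' : k = 1 := by omega
      have hsups1 : s1.sup ≤ 1 := by
        apply Multiset.sup_le.2
        intro x hx
        by_contra hx2
        have hxf : x ∈ f1 := mem_filter.2 ⟨hx, by omega⟩
        have : 1 ≤ Nge f1 2 := by
          rw [Nge]
          apply Multiset.card_pos_iff_exists_mem.2
          exact ⟨x, mem_filter.2 ⟨hxf, by omega⟩⟩
        rw [hNf1 2 (le_refl 2)] at this
        have h0 : Nge s1 (k + 1) = 0 := by omega
        rw [hk1'] at h0
        have h0' : Nge s1 2 = 0 := h0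
        omega
      rw [hsup, hb2def, hk1']
      exact sup_eq_right.2 (by omega)
    · -- k ≥ 2 : sup has multiplicity ≥ 2
      left
      have h1 : 1 ≤ Nge s1 (k + 1) := by omega
      obtain ⟨x, hx, hx2⟩ := exists_mem_of_Nge h1
      have hs1ne : s1 ≠ 0 := mem_ne_zero hx
      have hsups1k : k + 1 ≤ s1.sup := le_trans hx2 (Multiset.le_sup hx)
      have hb2sup : b2 = s1.sup := sup_eq_left.2 hsups1k
      have hmemf1 : b2 ∈ f1 := by
        rw [hb2sup]
        exact mem_filter.2 ⟨sup_mem hs1ne, by omega⟩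
      rw [hsup, hpsi]
      rw [Multiset.count_cons_self, Multiset.count_cons_of_ne (by omega), Multiset.count_add]
      have : 1 ≤ f1.count b2 := count_pos.2 hmemf1
      omega
  exact ⟨hsum, hposout, hNsucc, hNk, hchipsi, hG⟩
lemma chi_main {s : Multiset ℕ} {d : ℕ} (hpos : ∀ x ∈ s, 0 < x) (hd : 1 ≤ d)
    (hN1 : Nge s (d + 1) = d) (hN2 : d + 1 ≤ Nge s d)
    (hG : 2 ≤ s.count s.sup ∨ s.sup = 2) :
    (chiM s d).sum = s.sum ∧ (∀ x ∈ chiM s d, 0 < x) ∧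
    (chiM s d).count 1 = d ∧ Nge (chiM s d) (d + 1) = d ∧
    psiM (chiM s d) = s := by
  obtain ⟨x, hx, hx2⟩ := exists_mem_of_Nge (s := s) (i := d + 1) (show 1 ≤ Nge s (d + 1) by omega)
  have hne : s ≠ 0 := mem_ne_zero hx
  have hamem : s.sup ∈ s := sup_mem hne
  have hda : d + 1 ≤ s.sup := le_trans hx2 (Multiset.le_sup hx)
  set a := s.sup with hadef
  have hcntd : 1 ≤ s.count d := by
    have := count_eq_Nge_sub (s := s) d
    omega
  set e1 := s.erase a with he1def
  have hdmem : d ∈ e1 := by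
    rw [← count_pos, he1def, count_erase_of_ne (by omega) s]
    omega
  set s2 := e1.erase d with hs2def
  have he1 : e1 = d ::ₘ s2 := (Multiset.cons_erase hdmem).symm
  have hs : s = a ::ₘ d ::ₘ s2 := by
    rw [← he1]
    exact (Multiset.cons_erase hamem).symm
  have hs2pos : ∀ x ∈ s2, 0 < x := fun x hx =>
    hpos x (Multiset.mem_of_mem_erase (Multiset.mem_of_mem_erase hx))
  have hs2mem : ∀ x ∈ s2, x ∈ s := fun x hx =>
    Multiset.mem_of_mem_erase (Multiset.mem_of_mem_erase hx)
  have hNs2 : Nge s2 (d + 1) + 1 = d := by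
    have h := congrArg (fun t => Nge t (d + 1)) hs
    simp only [Nge_cons] at h
    rw [if_pos hda, if_neg (by omega)] at h
    omega
  set j := s2.count 1 with hjdef
  set f2 := s2.filter (fun x => 2 ≤ x) with hf2def
  set r2 := Multiset.replicate d 1 with hr2def
  have hchi : chiM s d = (a + j) ::ₘ (f2 + r2) := by rw [chiM]
  have hdec : f2 + Multiset.replicate j 1 = s2 := by
    rw [hf2def, hjdef]; exact ones_decomp hs2pos
  -- sum
  have hf2sum : f2.sum + j = s2.sum := by
    have h := congrArg Multiset.sum hdec
    rw [Multiset.sum_add, Multiset.sum_replicate, smul_eq_mul, mul_one] at h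
    omega
  have hssum : s.sum = a + (d + s2.sum) := by
    rw [hs, Multiset.sum_cons, Multiset.sum_cons]
  have hsum : (chiM s d).sum = s.sum := by
    rw [hchi, Multiset.sum_cons, Multiset.sum_add, hr2def, Multiset.sum_replicate,
      smul_eq_mul, mul_one]
    omega
  -- positivity
  have hposout : ∀ x ∈ chiM s d, 0 < x := by
    rw [hchi]
    intro y hy
    rcases Multiset.mem_cons.1 hy with rfl | hy
    · omega
    rcases Multiset.mem_add.1 hy with hy | hy
    · have := (mem_filter.1 hy).2; omega
    · rw [eq_of_mem_replicate hy]; omega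
  -- count of ones
  have hcnt1 : (chiM s d).count 1 = d := by
    rw [hchi, Multiset.count_cons, if_neg (by omega), Multiset.count_add,
      count_one_filter_two, hr2def, Multiset.count_replicate, if_pos rfl]
    omega
  -- Nge at d+1
  have hNchi : Nge (chiM s d) (d + 1) = d := by
    rw [hchi, Nge_cons, Nge_add, if_pos (by omega), Nge_filter_two _ (by omega), hr2def,
      Nge_replicate, if_neg (by omega)]
    omega
  -- psiM ∘ chiM = id
  have hf2le : ∀ y ∈ f2, y ≤ a := fun y hy =>
    Multiset.le_sup (hs2mem y (mem_filter.1 hy).1)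
  have hsupchi : (chiM s d).sup = a + j := by
    rw [hchi, Multiset.sup_cons, Multiset.sup_add]
    apply sup_eq_left.2
    apply sup_le_iff.2
    constructor
    · apply Multiset.sup_le.2
      intro y hy
      exact le_trans (hf2le y hy) (by omega)
    · apply Multiset.sup_le.2
      intro y hy
      rw [eq_of_mem_replicate hy]
      omega
  have herase : (chiM s d).erase ((chiM s d).sup) = f2 + r2 := by
    rw [hsupchi, hchi, Multiset.erase_cons_head]
  have hb2' : (f2 + r2).sup ⊔ (d + 1) = a := by
    rcases hG with hcnt2 | ha2
    · -- multiplicity of a in s is ≥ 2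
      have hmema2 : a ∈ s2 := by
        rw [← count_pos, hs2def, count_erase_of_ne (by omega) e1, he1def,
          Multiset.count_erase_self]
        omega
      have hmemf2 : a ∈ f2 := mem_filter.2 ⟨hmema2, by omega⟩
      have hge : a ≤ (f2 + r2).sup := Multiset.le_sup (Multiset.mem_add.2 (Or.inl hmemf2))
      have hle : (f2 + r2).sup ≤ a := by
        apply Multiset.sup_le.2
        intro y hy
        rcases Multiset.mem_add.1 hy with hy | hy
        · exact hf2le y hy
        · rw [eq_of_mem_replicate hy]; omega
      have : (f2 + r2).sup = a := le_antisymm hle hge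
      rw [this]
      exact sup_eq_left.2 (by omega)
    · -- a = 2, hence d = 1
      have hd1 : d = 1 := by omega
      have hf20 : f2 = 0 := by
        rw [hf2def]
        apply filter_eq_nil.2
        intro y hy h2y
        have h1 : 1 ≤ Nge s2 2 := by
          rw [Nge]
          apply Multiset.card_pos_iff_exists_mem.2
          exact ⟨y, mem_filter.2 ⟨hy, h2y⟩⟩
        have h0 : Nge s2 (d + 1) = 0 := by omega
        rw [hd1] at h0
        have h0' : Nge s2 2 = 0 := h0
        omega
      have hsupr : (f2 + r2).sup ≤ 1 := by
        apply Multiset.sup_le.2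
        intro y hy
        rcases Multiset.mem_add.1 hy with hy | hy
        · rw [hf20] at hy; exact absurd hy (Multiset.notMem_zero _)
        · rw [eq_of_mem_replicate hy]
      rw [sup_eq_right.2 (by omega : (f2 + r2).sup ≤ d + 1)]
      omega
  have hfilt : (f2 + r2).filter (fun x => 2 ≤ x) = f2 := by
    rw [Multiset.filter_add, filter_two_idem, hr2def, filter_two_replicate, add_zero]
  have hpsichi : psiM (chiM s d) = s := by
    rw [psiM, herase, hcnt1, hsupchi, hb2', hfilt]
    have hja : a + j - a = j := by omega
    rw [hja, hs, ← hdec]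
  exact ⟨hsum, hposout, hcnt1, hNchi, hpsichi⟩
/-- Add one to the largest part. -/
def phiM (s : Multiset ℕ) : Multiset ℕ := (s.sup + 1) ::ₘ s.erase s.sup

/-- Subtract one from the largest part. -/
def rhoM (s : Multiset ℕ) : Multiset ℕ := (s.sup - 1) ::ₘ s.erase s.sup

lemma phi_main {s : Multiset ℕ} {d : ℕ} (hpos : ∀ x ∈ s, 0 < x) (hd : 1 ≤ d)
    (hN1 : Nge s (d + 1) = d) (hN2 : d + 1 ≤ Nge s d) :
    (phiM s).sum = s.sum + 1 ∧ (∀ x ∈ phiM s, 0 < x) ∧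
    Nge (phiM s) (d + 1) = d ∧ d + 1 ≤ Nge (phiM s) d ∧
    rhoM (phiM s) = s ∧
    ¬(2 ≤ (phiM s).count (phiM s).sup ∨ (phiM s).sup = 2) := by
  obtain ⟨x, hx, hx2⟩ := exists_mem_of_Nge (s := s) (i := d + 1) (show 1 ≤ Nge s (d + 1) by omega)
  have hne : s ≠ 0 := mem_ne_zero hx
  have hcmem : s.sup ∈ s := sup_mem hne
  have hdc : d + 1 ≤ s.sup := le_trans hx2 (Multiset.le_sup hx)
  set c := s.sup with hcdef
  set t := s.erase c with htdef
  have hs : s = c ::ₘ t := (Multiset.cons_erase hcmem).symm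
  have htpos : ∀ x ∈ t, 0 < x := fun x hx => hpos x (Multiset.mem_of_mem_erase hx)
  have htle : ∀ x ∈ t, x ≤ c := fun x hx => Multiset.le_sup (Multiset.mem_of_mem_erase hx)
  have hNt : ∀ i, i ≤ c → Nge s i = Nge t i + 1 := by
    intro i hi
    have h := congrArg (fun u => Nge u i) hs
    simp only [Nge_cons] at h
    rw [if_pos hi] at h
    omega
  have hphi : phiM s = (c + 1) ::ₘ t := rfl
  have hsum : (phiM s).sum = s.sum + 1 := by
    rw [hphi, Multiset.sum_cons, hs, Multiset.sum_cons]
    omega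
  have hposout : ∀ x ∈ phiM s, 0 < x := by
    rw [hphi]
    intro y hy
    rcases Multiset.mem_cons.1 hy with rfl | hy
    · omega
    · exact htpos y hy
  have hNsucc : Nge (phiM s) (d + 1) = d := by
    rw [hphi, Nge_cons, if_pos (by omega)]
    have := hNt (d + 1) hdc
    omega
  have hNd : d + 1 ≤ Nge (phiM s) d := by
    rw [hphi, Nge_cons, if_pos (by omega)]
    have := hNt d (by omega)
    omega
  have hsupphi : (phiM s).sup = c + 1 := by
    rw [hphi, Multiset.sup_cons]
    apply sup_eq_left.2
    apply Multiset.sup_le.2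
    intro y hy
    exact le_trans (htle y hy) (by omega)
  have hrho : rhoM (phiM s) = s := by
    have hc1 : c + 1 - 1 = c := by omega
    rw [rhoM, hsupphi, hphi, Multiset.erase_cons_head, hc1, hs]
  have hnotG : ¬(2 ≤ (phiM s).count (phiM s).sup ∨ (phiM s).sup = 2) := by
    rw [hsupphi]
    push_neg
    constructor
    · rw [hphi, Multiset.count_cons_self]
      have : (c + 1) ∉ t := by
        intro hmem
        have := htle _ hmem
        omega
      rw [Multiset.count_eq_zero.2 this]
      omega
    · omega
  exact ⟨hsum, hposout, hNsucc, hNd, hrho, hnotG⟩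

lemma rho_main {s : Multiset ℕ} {d : ℕ} (hpos : ∀ x ∈ s, 0 < x) (hd : 1 ≤ d)
    (hN1 : Nge s (d + 1) = d) (hN2 : d + 1 ≤ Nge s d)
    (hnG : ¬(2 ≤ s.count s.sup ∨ s.sup = 2)) :
    (rhoM s).sum + 1 = s.sum ∧ (∀ x ∈ rhoM s, 0 < x) ∧
    Nge (rhoM s) (d + 1) = d ∧ d + 1 ≤ Nge (rhoM s) d ∧
    phiM (rhoM s) = s := by
  push_neg at hnG
  obtain ⟨hcnt, hne2⟩ := hnG
  obtain ⟨x, hx, hx2⟩ := exists_mem_of_Nge (s := s) (i := d + 1) (show 1 ≤ Nge s (d + 1) by omega)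
  have hne : s ≠ 0 := mem_ne_zero hx
  have hcmem : s.sup ∈ s := sup_mem hne
  have hdc : d + 1 ≤ s.sup := le_trans hx2 (Multiset.le_sup hx)
  set c := s.sup with hcdef
  have hcnt1 : s.count c = 1 := by
    have := Multiset.count_pos.2 hcmem
    omega
  -- c ≥ d + 2
  have hdc2 : d + 2 ≤ c := by
    by_contra hcon
    have hceq : c = d + 1 := by omega
    set f := s.filter (fun x => d + 1 ≤ x) with hfdef
    have hfrep : f = Multiset.replicate (Multiset.card f) c := by
      apply Multiset.eq_replicate_card.2
      intro b hb
      have h1 := (mem_filter.1 hb).2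
      have h2 : b ≤ c := Multiset.le_sup (mem_filter.1 hb).1
      omega
    have hcardf : Multiset.card f = d := hN1
    have hcf : f.count c = d := by
      rw [hfrep, Multiset.count_replicate, if_pos rfl]
      exact hcardf
    have hle : f.count c ≤ s.count c := Multiset.count_le_of_le c (Multiset.filter_le _ s)
    -- hence d ≤ 1, so d = 1 and c = 2, contradiction
    have hd1 : d = 1 := by omega
    rw [hceq, hd1] at hne2
    exact hne2 rfl
  set t := s.erase c with htdef
  have hs : s = c ::ₘ t := (Multiset.cons_erase hcmem).symm
  have htpos : ∀ x ∈ t, 0 < x := fun x hx => hpos x (Multiset.mem_of_mem_erase hx)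
  have hcnott : c ∉ t := by
    rw [← Multiset.count_eq_zero, htdef, Multiset.count_erase_self]
    omega
  have htle : ∀ x ∈ t, x ≤ c - 1 := by
    intro y hy
    have h1 : y ≤ c := Multiset.le_sup (Multiset.mem_of_mem_erase hy)
    have h2 : y ≠ c := fun h => hcnott (h ▸ hy)
    omega
  have hNt : ∀ i, i ≤ c → Nge s i = Nge t i + 1 := by
    intro i hi
    have h := congrArg (fun u => Nge u i) hs
    simp only [Nge_cons] at h
    rw [if_pos hi] at h
    omega
  have hrho : rhoM s = (c - 1) ::ₘ t := rfl
  have hsum : (rhoM s).sum + 1 = s.sum := by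
    rw [hrho, Multiset.sum_cons, hs, Multiset.sum_cons]
    omega
  have hposout : ∀ x ∈ rhoM s, 0 < x := by
    rw [hrho]
    intro y hy
    rcases Multiset.mem_cons.1 hy with rfl | hy
    · omega
    · exact htpos y hy
  have hNsucc : Nge (rhoM s) (d + 1) = d := by
    rw [hrho, Nge_cons, if_pos (by omega)]
    have := hNt (d + 1) (by omega)
    omega
  have hNd : d + 1 ≤ Nge (rhoM s) d := by
    rw [hrho, Nge_cons, if_pos (by omega)]
    have := hNt d (by omega)
    omega
  have hsuprho : (rhoM s).sup = c - 1 := by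
    rw [hrho, Multiset.sup_cons]
    apply sup_eq_left.2
    apply Multiset.sup_le.2
    intro y hy
    exact htle y hy
  have hphirho : phiM (rhoM s) = s := by
    have hc1 : c - 1 + 1 = c := by omega
    rw [phiM, hsuprho, hrho, Multiset.erase_cons_head, hc1, hs]
  exact ⟨hsum, hposout, hNsucc, hNd, hphirho⟩

/-! ### Partition level -/

def Gcond {n : ℕ} (P : Nat.Partition n) : Prop :=
  2 ≤ P.parts.count P.parts.sup ∨ P.parts.sup = 2

lemma psi_all {n : ℕ} (P : Nat.Partition n) (hn : 1 ≤ n) (hc : crank P = 0) :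
    (∀ x ∈ psiM P.parts, 0 < x) ∧ (psiM P.parts).sum = n ∧
    ∀ (Q : Nat.Partition n), Q.parts = psiM P.parts →
      (Fcond Q ∧ Gcond Q) ∧ chiM Q.parts (durfee Q) = P.parts := by
  obtain ⟨hk, hN⟩ := (crank_eq_zero_iff P hn).1 hc
  obtain ⟨hsum, hpos, hNsucc, hNk, hchipsi, hG⟩ :=
    psi_main (s := P.parts) (k := partOmega P) (fun x hx => P.parts_pos hx) hk rfl hN
  refine ⟨hpos, by rw [hsum, P.parts_sum], ?_⟩
  intro Q hQ
  have hdur : durfee Q = partOmega P := by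
    apply durfee_eq Q
    · rw [hQ]; omega
    · rw [hQ]; omega
  have hFc : Fcond Q := by
    rw [Fcond_iff, hdur, hQ]
    omega
  have hGc : Gcond Q := by
    rw [Gcond, hQ]
    exact hG
  refine ⟨⟨hFc, hGc⟩, ?_⟩
  rw [hQ, hdur]
  exact hchipsi

lemma chi_all {n : ℕ} (Q : Nat.Partition n) (hn : 1 ≤ n) (hF : Fcond Q) (hG : Gcond Q) :
    (∀ x ∈ chiM Q.parts (durfee Q), 0 < x) ∧ (chiM Q.parts (durfee Q)).sum = n ∧
    ∀ (R : Nat.Partition n), R.parts = chiM Q.parts (durfee Q) →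
      crank R = 0 ∧ psiM R.parts = Q.parts := by
  have hd : 1 ≤ durfee Q := durfee_pos Q hn
  have hN1 : Nge Q.parts (durfee Q + 1) = durfee Q := Fcond_Nge_succ hF
  have hN2 : durfee Q + 1 ≤ Nge Q.parts (durfee Q) := Fcond_Nge hF
  obtain ⟨hsum, hpos, hcnt1, hNchi, hpsichi⟩ :=
    chi_main (s := Q.parts) (d := durfee Q) (fun x hx => Q.parts_pos hx) hd hN1 hN2 hG
  refine ⟨hpos, by rw [hsum, Q.parts_sum], ?_⟩
  intro R hR
  have homega : partOmega R = durfee Q := by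
    rw [partOmega, hR]
    exact hcnt1
  constructor
  · rw [crank_eq_zero_iff R hn, homega, hR]
    exact ⟨hd, hNchi⟩
  · rw [hR]
    exact hpsichi

lemma phi_all {m : ℕ} (Q : Nat.Partition m) (hm : 1 ≤ m) (hF : Fcond Q) :
    (∀ x ∈ phiM Q.parts, 0 < x) ∧ (phiM Q.parts).sum = m + 1 ∧
    ∀ (R : Nat.Partition (m + 1)), R.parts = phiM Q.parts →
      (Fcond R ∧ ¬Gcond R) ∧ rhoM R.parts = Q.parts := by
  have hd : 1 ≤ durfee Q := durfee_pos Q hm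
  have hN1 : Nge Q.parts (durfee Q + 1) = durfee Q := Fcond_Nge_succ hF
  have hN2 : durfee Q + 1 ≤ Nge Q.parts (durfee Q) := Fcond_Nge hF
  obtain ⟨hsum, hpos, hNsucc, hNd, hrho, hnotG⟩ :=
    phi_main (s := Q.parts) (d := durfee Q) (fun x hx => Q.parts_pos hx) hd hN1 hN2
  refine ⟨hpos, by rw [hsum, Q.parts_sum], ?_⟩
  intro R hR
  have hdur : durfee R = durfee Q := by
    apply durfee_eq R
    · rw [hR]; omega
    · rw [hR]; omega
  refine ⟨⟨?_, ?_⟩, ?_⟩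
  · rw [Fcond_iff, hdur, hR]
    omega
  · rw [Gcond, hR]
    exact hnotG
  · rw [hR]
    exact hrho

lemma rho_all {m : ℕ} (R : Nat.Partition (m + 1)) (hF : Fcond R) (hnG : ¬Gcond R) :
    (∀ x ∈ rhoM R.parts, 0 < x) ∧ (rhoM R.parts).sum = m ∧
    ∀ (Q : Nat.Partition m), Q.parts = rhoM R.parts →
      Fcond Q ∧ phiM Q.parts = R.parts := by
  have hd : 1 ≤ durfee R := durfee_pos R (by omega)
  have hN1 : Nge R.parts (durfee R + 1) = durfee R := Fcond_Nge_succ hF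
  have hN2 : durfee R + 1 ≤ Nge R.parts (durfee R) := Fcond_Nge hF
  obtain ⟨hsum, hpos, hNsucc, hNd, hphirho⟩ :=
    rho_main (s := R.parts) (d := durfee R) (fun x hx => R.parts_pos hx) hd hN1 hN2
      (by rw [Gcond] at hnG; exact hnG)
  refine ⟨hpos, by rw [R.parts_sum] at hsum; omega, ?_⟩
  intro Q hQ
  have hdur : durfee Q = durfee R := by
    apply durfee_eq Q
    · rw [hQ]; omega
    · rw [hQ]; omega
  constructor
  · rw [Fcond_iff, hdur, hQ]
    omega
  · rw [hQ]
    exact hphirho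

/-- The equivalence between crank-zero partitions and `G`-partitions. -/
noncomputable def equivCG {n : ℕ} (hn : 1 ≤ n) :
    {P : Nat.Partition n // crank P = 0} ≃ {Q : Nat.Partition n // Fcond Q ∧ Gcond Q} where
  toFun P := ⟨⟨psiM P.1.parts, fun hx => (psi_all P.1 hn P.2).1 _ hx,
      (psi_all P.1 hn P.2).2.1⟩, ((psi_all P.1 hn P.2).2.2 _ rfl).1⟩
  invFun Q := ⟨⟨chiM Q.1.parts (durfee Q.1), fun hx => (chi_all Q.1 hn Q.2.1 Q.2.2).1 _ hx,
      (chi_all Q.1 hn Q.2.1 Q.2.2).2.1⟩, ((chi_all Q.1 hn Q.2.1 Q.2.2).2.2 _ rfl).1⟩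
  left_inv P := by
    apply Subtype.ext
    apply Nat.Partition.ext
    exact ((psi_all P.1 hn P.2).2.2 _ rfl).2
  right_inv Q := by
    apply Subtype.ext
    apply Nat.Partition.ext
    exact ((chi_all Q.1 hn Q.2.1 Q.2.2).2.2 _ rfl).2

/-- The equivalence between `F`-partitions of `m` and non-`G` `F`-partitions of `m+1`. -/
noncomputable def equivFH {m : ℕ} (hm : 1 ≤ m) :
    {Q : Nat.Partition m // Fcond Q} ≃ {R : Nat.Partition (m + 1) // Fcond R ∧ ¬Gcond R} where
  toFun Q := ⟨⟨phiM Q.1.parts, fun hx => (phi_all Q.1 hm Q.2).1 _ hx,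
      (phi_all Q.1 hm Q.2).2.1⟩, ((phi_all Q.1 hm Q.2).2.2 _ rfl).1⟩
  invFun R := ⟨⟨rhoM R.1.parts, fun hx => (rho_all R.1 R.2.1 R.2.2).1 _ hx,
      (rho_all R.1 R.2.1 R.2.2).2.1⟩, ((rho_all R.1 R.2.1 R.2.2).2.2 _ rfl).1⟩
  left_inv Q := by
    apply Subtype.ext
    apply Nat.Partition.ext
    exact ((phi_all Q.1 hm Q.2).2.2 _ rfl).2
  right_inv R := by
    apply Subtype.ext
    apply Nat.Partition.ext
    exact ((rho_all R.1 R.2.1 R.2.2).2.2 _ rfl).2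

noncomputable def splitEquiv {α : Type*} (A B : α → Prop) :
    {x // A x} ≃ {x // A x ∧ B x} ⊕ {x // A x ∧ ¬B x} := by
  classical
  exact {
    toFun := fun x => if h : B x.1 then Sum.inl ⟨x.1, x.2, h⟩ else Sum.inr ⟨x.1, x.2, h⟩
    invFun := fun y => Sum.elim (fun z => ⟨z.1, z.2.1⟩) (fun z => ⟨z.1, z.2.1⟩) y
    left_inv := fun x => by by_cases h : B x.1 <;> simp [h]
    right_inv := fun y => by
      rcases y with z | z
      · simp [dif_pos z.2.2]
      · simp [dif_neg z.2.2] }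


/-- For `n ≥ 2`, the number of partitions of `n` with crank `0` equals `F(n) - F(n-1)`,
where `F(m)` counts partitions of `m` whose Frobenius symbol contains no `0`. -/
theorem stmt_18 (n : ℕ) (hn : 2 ≤ n) :
    (Nat.card {P : Nat.Partition n // crank P = 0} : ℤ) = (F n : ℤ) - F (n - 1) := by
  obtain ⟨m, rfl⟩ : ∃ m, n = m + 1 := ⟨n - 1, by omega⟩
  have hm : 1 ≤ m := by omega
  have hn1 : 1 ≤ m + 1 := by omega
  have h1 : Nat.card {P : Nat.Partition (m + 1) // crank P = 0} =
      Nat.card {Q : Nat.Partition (m + 1) // Fcond Q ∧ Gcond Q} :=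
    Nat.card_congr (equivCG hn1)
  have h2 : F m = Nat.card {R : Nat.Partition (m + 1) // Fcond R ∧ ¬Gcond R} := by
    rw [F_eq]
    exact Nat.card_congr (equivFH hm)
  have h3 : F (m + 1) = Nat.card {Q : Nat.Partition (m + 1) // Fcond Q ∧ Gcond Q} +
      Nat.card {R : Nat.Partition (m + 1) // Fcond R ∧ ¬Gcond R} := by
    rw [F_eq, Nat.card_congr (splitEquiv Fcond Gcond), Nat.card_sum]
  have h4 : m + 1 - 1 = m := by omega
  rw [h4, h1, h2, h3]
  push_cast
  ring
end
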